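/- Let a₁, a₂, a₃ ∈ ℝ with a₃ ≠ 0, set s = (a₁ + a₂)/a₃, let Ω ⊆ ℝ³ be open with coordinates (x, y, t), and let u : Ω → ℝ be a C² function with u_t > 0 on Ω satisfying the generalized dispersionless Hirota equation a₁ u_x u_{yt} + a₂ u_y u_{xt} + a₃ u_t u_{xy} = 0 on Ω. Then a₂ ∂_x( (u_t)^s · u_y ) + a₁ ∂_y( (u_t)^s · u_x ) = 0 on Ω, where (u_t)^s denotes the real power u_t^s. -/

import Mathlib

/-- Partial derivative of `f : ℝⁿ → ℝ` in the `i`-th coordinate direction. -/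
noncomputable def pd {n : ℕ} (i : Fin n) (f : (Fin n → ℝ) → ℝ) (x : Fin n → ℝ) : ℝ :=
  fderiv ℝ f x (Pi.single i 1)

/-- Every solution with `u_t > 0` of the generalized dispersionless Hirota equation
`a₁ u_x u_{yt} + a₂ u_y u_{xt} + a₃ u_t u_{xy} = 0` (with `a₃ ≠ 0`,
`s = (a₁+a₂)/a₃`) satisfies the conservation law
`a₂ ((u_t)^s u_y)_x + a₁ ((u_t)^s u_x)_y = 0`, where `(u_t)^s` is the real power.
Coordinates on `ℝ³` are `x = 0`, `y = 1`, `t = 2`. -/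
theorem hirota_power_conservation_law
    (a1 a2 a3 : ℝ) (ha3 : a3 ≠ 0) (s : ℝ) (hs : s = (a1 + a2) / a3)
    (Ω : Set (Fin 3 → ℝ)) (hΩ : IsOpen Ω)
    (u : (Fin 3 → ℝ) → ℝ) (hu : ContDiffOn ℝ 2 u Ω)
    (hut : ∀ X ∈ Ω, 0 < pd 2 u X)
    (heq : ∀ X ∈ Ω,
      a1 * pd 0 u X * pd 2 (pd 1 u) X
        + a2 * pd 1 u X * pd 2 (pd 0 u) X
        + a3 * pd 2 u X * pd 1 (pd 0 u) X = 0) :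
    ∀ X ∈ Ω,
      a2 * pd 0 (fun Y => pd 2 u Y ^ s * pd 1 u Y) X
        + a1 * pd 1 (fun Y => pd 2 u Y ^ s * pd 0 u Y) X = 0 := by
  intro X hX
  have hXnhds : Ω ∈ nhds X := hΩ.mem_nhds hX
  have hud : ∀ Y ∈ Ω, DifferentiableAt ℝ u Y := fun Y hY =>
    (hu.contDiffAt (hΩ.mem_nhds hY)).differentiableAt (by norm_num)
  have hf'd : DifferentiableAt ℝ (fderiv ℝ u) X := by
    have h2 : ContDiffAt ℝ 2 u X := hu.contDiffAt hXnhds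
    exact (h2.fderiv_right (m := 1) le_rfl).differentiableAt one_ne_zero
  set f'' := fderiv ℝ (fderiv ℝ u) X with hf''def
  have hf''at : HasFDerivAt (fderiv ℝ u) f'' X := hf'd.hasFDerivAt
  have hueventually : ∀ᶠ Y in nhds X, HasFDerivAt u (fderiv ℝ u Y) Y := by
    filter_upwards [hXnhds] with Y hY using (hud Y hY).hasFDerivAt
  have hsymm : ∀ v w, f'' v w = f'' w v := fun v w =>
    second_derivative_symmetric_of_eventually hueventually hf''at v w
  have hpd : ∀ i : Fin 3, HasFDerivAt (pd i u)
      ((ContinuousLinearMap.apply ℝ ℝ (Pi.single i 1 : Fin 3 → ℝ)).comp f'') X := fun i =>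
    (ContinuousLinearMap.apply ℝ ℝ (Pi.single i 1 : Fin 3 → ℝ)).hasFDerivAt.comp X hf''at
  have hsecond : ∀ i j : Fin 3, pd j (pd i u) X
      = f'' (Pi.single j 1) (Pi.single i 1) := by
    intro i j
    have h := (hpd i).fderiv
    simp only [pd, h, ContinuousLinearMap.coe_comp', Function.comp_apply,
      ContinuousLinearMap.apply_apply]
  have hg2 : 0 < pd 2 u X := hut X hX
  have hrpow : HasFDerivAt (fun Y => pd 2 u Y ^ s)
      ((s * pd 2 u X ^ (s - 1)) •
        ((ContinuousLinearMap.apply ℝ ℝ (Pi.single 2 1 : Fin 3 → ℝ)).comp f'')) X :=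
    (hpd 2).rpow_const (Or.inl hg2.ne')
  have hval : ∀ i j : Fin 3,
      pd j (fun Y => pd 2 u Y ^ s * pd i u Y) X
      = pd 2 u X ^ s * f'' (Pi.single j 1) (Pi.single i 1)
        + pd i u X * (s * pd 2 u X ^ (s - 1) * f'' (Pi.single j 1) (Pi.single 2 1)) := by
    intro i j
    have h : fderiv ℝ (fun Y => pd 2 u Y ^ s * pd i u Y) X = _ := (hrpow.mul (hpd i)).fderiv
    show fderiv ℝ (fun Y => pd 2 u Y ^ s * pd i u Y) X (Pi.single j 1) = _
    rw [h]
    simp only [ContinuousLinearMap.add_apply, ContinuousLinearMap.smul_apply,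
      ContinuousLinearMap.coe_comp', Function.comp_apply, ContinuousLinearMap.apply_apply,
      smul_eq_mul]
  rw [hval 1 0, hval 0 1]
  have hE := heq X hX
  rw [hsecond 1 2, hsecond 0 2, hsecond 0 1] at hE
  rw [hsymm (Pi.single 2 1) (Pi.single 1 1), hsymm (Pi.single 2 1) (Pi.single 0 1)] at hE
  have hpow : pd 2 u X ^ s = pd 2 u X ^ (s - 1) * pd 2 u X := by
    rw [← Real.rpow_add_one hg2.ne' (s - 1)]; ring_nf
  have hsa3 : s * a3 = a1 + a2 := by rw [hs]; field_simp
  rw [hsymm (Pi.single 0 1) (Pi.single 1 1), hpow]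
  linear_combination (s * pd 2 u X ^ (s - 1)) * hE
    - (pd 2 u X ^ (s - 1) * pd 2 u X * f'' (Pi.single 1 1) (Pi.single 0 1)) * hsa3
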